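/- If a is an ideal of S containing p and δ is a p-derivation on S, then δ(a^n) ⊆ a^{n−1} for all n ≥ 1. In particular, a^n ⊆ a^{⟨n⟩_p} := { f ∈ S : δ^i(f) ∈ a for all 0 ≤ i ≤ n−1 }. -/

import Mathlib

/-- if p ∈ a then δ(a^n) ⊆ a^{n-1}; in particular a^n ⊆ a^{⟨n⟩_p}. -/
theorem stmt_8 (p : ℕ) (hp : p.Prime) (S : Type*) [CommRing S]
    (hpnzd : ∀ x : S, (p : S) * x = 0 → x = 0)
    (δ : S → S) (hδ : ∃ φ : S →+* S, ∀ x : S, φ x = x ^ p + p * δ x)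
    (a : Ideal S) (hpa : (p : S) ∈ a) :
    (∀ n : ℕ, 1 ≤ n → ∀ x ∈ a ^ n, δ x ∈ a ^ (n - 1)) ∧
    (∀ n : ℕ, ∀ x ∈ a ^ n, ∀ i < n, δ^[i] x ∈ a) := by
  obtain ⟨φ, hφ⟩ := hδ
  have hp1 : 1 ≤ p := hp.one_le
  -- product rule
  have hmul : ∀ x y : S, δ (x * y) = x ^ p * δ y + y ^ p * δ x + (p : S) * δ x * δ y := by
    intro x y
    rw [← sub_eq_zero]
    apply hpnzd
    rw [mul_sub]
    have h1 : (p : S) * δ (x * y) = φ (x * y) - (x * y) ^ p := by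
      rw [hφ]; ring
    have h2 : φ (x * y) = (x ^ p + p * δ x) * (y ^ p + p * δ y) := by
      rw [map_mul, hφ, hφ]
    rw [h1, h2, mul_pow]; ring
  -- addition rule with error term
  have hadd : ∀ x y : S, δ (x + y) =
      δ x + δ y - ∑ k ∈ Finset.Ioo 0 p, x ^ k * y ^ (p - k) * ↑(p.choose k / p) := by
    intro x y
    rw [← sub_eq_zero]
    apply hpnzd
    rw [mul_sub]
    have h1 : (p : S) * δ (x + y) = φ (x + y) - (x + y) ^ p := by
      rw [hφ]; ring
    have h2 : φ (x + y) = (x ^ p + p * δ x) + (y ^ p + p * δ y) := by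
      rw [map_add, hφ, hφ]
    rw [h1, h2, add_pow_prime_eq' hp]; ring
  -- main lemma
  have main : ∀ n : ℕ, ∀ x ∈ a ^ n, δ x ∈ a ^ (n - 1) := by
    intro n
    induction n with
    | zero => intro x _; simp
    | succ n ih =>
      cases n with
      | zero => intro x _; simp
      | succ m =>
        -- n = m+1, show x ∈ a^(m+2) → δ x ∈ a^(m+1)
        intro x hx
        rw [pow_succ] at hx
        have key : x ∈ a ^ (m + 2) ∧ δ x ∈ a ^ (m + 1) := by
          refine Submodule.mul_induction_on hx ?_ ?_
          · intro i hi j hj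
            constructor
            · rw [pow_succ]; exact Ideal.mul_mem_mul hi hj
            · rw [hmul]
              refine add_mem (add_mem ?_ ?_) ?_
              · -- i^p * δ j ∈ a^(m+1), since i^p ∈ a^(m+1)
                have : i ^ p ∈ a ^ (m + 1) := by
                  have : i ^ p = i * i ^ (p - 1) := by
                    rw [← pow_succ']
                    congr 1
                    omega
                  rw [this]
                  exact Ideal.mul_mem_right _ _ hi
                exact Ideal.mul_mem_right _ _ this
              · -- j^p * δ i : j^p ∈ a, δ i ∈ a^m
                have hji : δ i ∈ a ^ m := by
                  have := ih i hi
                  simpa using this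
                have hjp : j ^ p ∈ a := by
                  have : j ^ p = j * j ^ (p - 1) := by
                    rw [← pow_succ']; congr 1; omega
                  rw [this]; exact Ideal.mul_mem_right _ _ hj
                have := Ideal.mul_mem_mul hjp hji
                rwa [← pow_succ'] at this
              · -- p * δ i * δ j
                have hji : δ i ∈ a ^ m := by simpa using ih i hi
                have := Ideal.mul_mem_mul hpa hji
                rw [← pow_succ'] at this
                exact Ideal.mul_mem_right _ _ this
          · intro x y hx hy
            refine ⟨add_mem hx.1 hy.1, ?_⟩
            rw [hadd]
            refine sub_mem (add_mem hx.2 hy.2) ?_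
            refine Submodule.sum_mem _ fun k hk => ?_
            rw [Finset.mem_Ioo] at hk
            have hxk : x ^ k ∈ a ^ (m + 2) := by
              have : x ^ k = x * x ^ (k - 1) := by
                rw [← pow_succ']; congr 1; omega
              rw [this]; exact Ideal.mul_mem_right _ _ hx.1
            have : x ^ k * y ^ (p - k) * ↑(p.choose k / p) ∈ a ^ (m + 2) :=
              Ideal.mul_mem_right _ _ (Ideal.mul_mem_right _ _ hxk)
            exact Ideal.pow_le_pow_right (by omega) this
        exact key.2
  refine ⟨fun n _ x hx => main n x hx, ?_⟩
  have iter : ∀ i n : ℕ, ∀ x ∈ a ^ n, δ^[i] x ∈ a ^ (n - i) := by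
    intro i
    induction i with
    | zero => intro n x hx; simpa using hx
    | succ i ih =>
      intro n x hx
      rw [Function.iterate_succ_apply']
      have := main (n - i) _ (ih n x hx)
      have hnn : n - i - 1 = n - (i + 1) := by omega
      rwa [hnn] at this
  intro n x hx i hi
  have := iter i n x hx
  have h1 : a ^ (n - i) ≤ a ^ 1 := Ideal.pow_le_pow_right (by omega)
  simpa using h1 this
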